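/- arXiv:1506.02823 — 7 statements merged into one kernel-verified Lean document; each statement's English description precedes it below -/
import Mathlib

section
/- If u is a weak Pareto optimum of the vector optimization problem for continuously differentiable functions f_1,...,f_q on a Hilbert space H (i.e. there is no v with f_i(v) < f_i(u) for all i), then 0 belongs to the convex hull of the gradients {∇f_1(u),...,∇f_q(u)}. -/
/-!
If `0` were not in the (compact, convex) hull of the gradients, strict separation would give a
vector `v` with `⟪∇fᵢ(u), v⟫ > 0` for every `i`. Then `-v` is a descent direction for all `fᵢ` at
once, and a small step along it decreases every objective, contradicting weak Pareto optimality.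
-/

open scoped RealInnerProductSpace Topology

open Filter Set InnerProductSpace

section Separation

variable {H : Type*} [NormedAddCommGroup H] [InnerProductSpace ℝ H] [CompleteSpace H]

theorem exists_forall_inner_pos_of_zero_notMem {K : Set H} (hconv : Convex ℝ K)
    (hclosed : IsClosed K) (h0 : (0 : H) ∉ K) : ∃ v : H, ∀ x ∈ K, 0 < ⟪x, v⟫ := by
  obtain ⟨φ, c, hc0, hc⟩ := geometric_hahn_banach_point_closed hconv hclosed h0
  refine ⟨(toDual ℝ H).symm φ, fun x hx => ?_⟩
  rw [real_inner_comm, toDual_symm_apply]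
  linarith [hc x hx, map_zero φ]

end Separation

section Descent

variable {E : Type*} [NormedAddCommGroup E] [NormedSpace ℝ E]

theorem HasFDerivAt.eventually_lt_of_apply_neg {f : E → ℝ} {f' : E →L[ℝ] ℝ} {u v : E}
    (hf : HasFDerivAt f f' u) (hv : f' v < 0) : ∀ᶠ t in 𝓝[>] (0 : ℝ), f (u + t • v) < f u := by
  have hline : HasDerivAt (fun t : ℝ => f (u + t • v)) (f' v) 0 := by
    have hcurve : HasDerivAt (fun t : ℝ => u + t • v) v 0 := by
      simpa using ((hasDerivAt_id (0 : ℝ)).smul_const v).const_add u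
    exact (by simpa using hf : HasFDerivAt f f' (u + (0 : ℝ) • v)).comp_hasDerivAt 0 hcurve
  have hslope : ∀ᶠ t in 𝓝[>] (0 : ℝ), t⁻¹ * (f (u + t • v) - f u) < 0 := by
    simpa using hline.tendsto_slope_zero_right.eventually_lt_const hv
  filter_upwards [hslope, self_mem_nhdsWithin] with t ht (htpos : 0 < t)
  exact sub_neg.1 (neg_of_mul_neg_right ht (inv_nonneg.2 htpos.le))

theorem exists_forall_lt_of_hasFDerivAt_apply_neg {ι : Type*} [Finite ι] {f : ι → E → ℝ}
    {f' : ι → E →L[ℝ] ℝ} {u v : E} (hf : ∀ i, HasFDerivAt (f i) (f' i) u)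
    (hv : ∀ i, f' i v < 0) : ∃ w : E, ∀ i, f i w < f i u :=
  have hdescent := eventually_all.2 fun i => (hf i).eventually_lt_of_apply_neg (hv i)
  let ⟨t, ht⟩ := hdescent.exists
  ⟨u + t • v, ht⟩

end Descent

/-- Fermat's rule: a weak Pareto optimum of the multi-objective problem satisfies
`0 ∈ co {∇f₁(u), ..., ∇f_q(u)}`. -/
theorem weak_pareto_fermat
    {H : Type*} [NormedAddCommGroup H] [InnerProductSpace ℝ H] [CompleteSpace H]
    {q : ℕ} (f : Fin q → H → ℝ) (hf : ∀ i, ContDiff ℝ 1 (f i)) (u : H)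
    (hpareto : ¬ ∃ v : H, ∀ i, f i v < f i u) :
    (0 : H) ∈ convexHull ℝ (Set.range fun i => gradient (f i) u) := by
  by_contra h0
  obtain ⟨v, hv⟩ := exists_forall_inner_pos_of_zero_notMem (convex_convexHull ℝ _)
    ((finite_range _).isCompact_convexHull (𝕜 := ℝ)).isClosed h0
  refine hpareto (exists_forall_lt_of_hasFDerivAt_apply_neg (v := -v)
    (fun i => ((hf i).differentiable one_ne_zero u).hasGradientAt.hasFDerivAt) fun i => ?_)
  simpa using hv _ (subset_convexHull ℝ _ (mem_range_self i))
end

section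
/- If s(u) ≠ 0, then the unit vector s(u)/‖s(u)‖ is the unique minimizer over the closed unit ball of d ↦ max_{i∈{1,...,q}} ⟨∇f_i(u), d⟩. -/
open scoped RealInnerProductSpace

/-- Variational inequality for the minimal norm element of a convex set. -/
lemma min_norm_variational {H : Type*} [NormedAddCommGroup H] [InnerProductSpace ℝ H]
    {K : Set H} (hK : Convex ℝ K) {p : H} (hpK : p ∈ K)
    (hmin : ∀ y ∈ K, ‖p‖ ≤ ‖y‖) {y : H} (hy : y ∈ K) :
    ‖p‖ ^ 2 ≤ ⟪p, y⟫ := by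
  by_contra hlt
  push_neg at hlt
  have hc : ⟪p, y - p⟫ < 0 := by
    rw [inner_sub_right, real_inner_self_eq_norm_sq]
    linarith
  have hyp : y - p ≠ 0 := by
    intro h; rw [h, inner_zero_right] at hc; exact absurd hc (lt_irrefl 0)
  have hs : (0:ℝ) < ‖y - p‖ ^ 2 := pow_pos (norm_pos_iff.mpr hyp) 2
  set c := ⟪p, y - p⟫ with hcdef
  set s := ‖y - p‖ ^ 2 with hsdef
  set t := min 1 (-c / s) with htdef
  have ht0 : 0 < t := lt_min one_pos (div_pos (by linarith) hs)
  have ht1 : t ≤ 1 := min_le_left _ _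
  have hts : t * s ≤ -c := by
    have := min_le_right 1 (-c / s)
    calc t * s ≤ (-c / s) * s := by nlinarith
      _ = -c := by field_simp
  have hz : p + t • (y - p) ∈ K := by
    have := hK hpK hy (a := 1 - t) (b := t) (by linarith) (le_of_lt ht0) (by ring)
    convert this using 1
    module
  have hle : ‖p‖ ^ 2 ≤ ‖p + t • (y - p)‖ ^ 2 := by
    have := hmin _ hz
    nlinarith [norm_nonneg p]
  have hexp : ‖p + t • (y - p)‖ ^ 2 = ‖p‖ ^ 2 + 2 * (t * c) + t ^ 2 * s := by
    rw [norm_add_sq_real, real_inner_smul_right, norm_smul, Real.norm_eq_abs,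
      abs_of_pos ht0, mul_pow]
  nlinarith

/-- If `s(u) ≠ 0`, then `s(u)/‖s(u)‖` is the unique minimizer over the closed unit
ball of `d ↦ max_i ⟨∇f_i(u), d⟩`. -/
theorem steepest_descent_unique_minimizer
    {H : Type*} [NormedAddCommGroup H] [InnerProductSpace ℝ H] [CompleteSpace H]
    {q : ℕ} (hq : 0 < q) (f : Fin q → H → ℝ) (hf : ∀ i, ContDiff ℝ 1 (f i)) (u : H) (p : H)
    (hmem : p ∈ convexHull ℝ (Set.range fun i => gradient (f i) u))
    (hmin : ∀ y ∈ convexHull ℝ (Set.range fun i => gradient (f i) u), ‖p‖ ≤ ‖y‖)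
    (hp : p ≠ 0) :
    (‖-p‖⁻¹ • -p) ∈ Metric.closedBall (0 : H) 1 ∧
      ∀ d ∈ Metric.closedBall (0 : H) 1, d ≠ ‖-p‖⁻¹ • -p →
        Finset.univ.sup' (Finset.univ_nonempty_iff.mpr ⟨⟨0, hq⟩⟩)
            (fun i => ⟪gradient (f i) u, ‖-p‖⁻¹ • -p⟫) <
          Finset.univ.sup' (Finset.univ_nonempty_iff.mpr ⟨⟨0, hq⟩⟩)
            (fun i => ⟪gradient (f i) u, d⟫) := by
  set g : Fin q → H := fun i => gradient (f i) u with hg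
  have hpn : (0:ℝ) < ‖p‖ := norm_pos_iff.mpr hp
  have hnp : ‖-p‖ = ‖p‖ := norm_neg p
  set dstar : H := ‖-p‖⁻¹ • -p with hdstar
  have hds_norm : ‖dstar‖ = 1 := by
    rw [hdstar, norm_smul, norm_inv, norm_norm, hnp]
    field_simp
  -- variational inequality for each gradient
  have hvar : ∀ i, ‖p‖ ^ 2 ≤ ⟪p, g i⟫ := fun i =>
    min_norm_variational (convex_convexHull ℝ _) hmem hmin
      (subset_convexHull ℝ _ ⟨i, rfl⟩)
  -- value at dstar is ≤ -‖p‖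
  have hds_val : ∀ i, ⟪g i, dstar⟫ ≤ -‖p‖ := by
    intro i
    rw [hdstar, real_inner_smul_right, inner_neg_right, real_inner_comm, hnp]
    have := hvar i
    rw [inv_mul_le_iff₀ hpn] -- maybe wrong lemma name; fix below if needed
    nlinarith
  -- convex hull bound: ⟪p, d⟫ ≤ sup
  have hhull : ∀ d : H, ⟪p, d⟫ ≤ Finset.univ.sup'
      (Finset.univ_nonempty_iff.mpr ⟨⟨0, hq⟩⟩) (fun i => ⟪g i, d⟫) := by
    intro d
    set M := Finset.univ.sup' (Finset.univ_nonempty_iff.mpr ⟨⟨0, hq⟩⟩)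
      (fun i => ⟪g i, d⟫) with hM
    have hsub : convexHull ℝ (Set.range g) ⊆ {x : H | ⟪x, d⟫ ≤ M} := by
      apply convexHull_min
      · rintro _ ⟨i, rfl⟩
        exact Finset.le_sup' (fun i => ⟪g i, d⟫) (Finset.mem_univ i)
      · exact convex_halfSpace_le
          ⟨fun x y => inner_add_left x y d, fun c x => real_inner_smul_left x d c⟩ M
    exact hsub hmem
  constructor
  · simp only [Metric.mem_closedBall, dist_zero_right]
    exact le_of_eq hds_norm
  · intro d hd hne
    have hdnorm : ‖d‖ ≤ 1 := by
      rwa [Metric.mem_closedBall, dist_zero_right] at hd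
    have hge : -‖p‖ ≤ ⟪p, d⟫ := by
      have h := real_inner_le_norm p (-d)
      rw [inner_neg_right, norm_neg] at h
      nlinarith
    have hkey : -‖p‖ < ⟪p, d⟫ := by
      rcases lt_or_eq_of_le hge with h | h
      · exact h
      · exfalso
        apply hne
        -- equality case in Cauchy-Schwarz
        have h1 : ⟪-p, d⟫ = ‖p‖ := by
          rw [inner_neg_left]; linarith [h.symm]
        have h2 : ⟪-p, d⟫ = ‖-p‖ * ‖d‖ := by
          have hcs := real_inner_le_norm (-p) d
          have : ‖-p‖ * ‖d‖ ≤ ‖-p‖ * 1 := by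
            apply mul_le_mul_of_nonneg_left hdnorm (norm_nonneg _)
          rw [hnp] at *
          nlinarith
        have := (inner_eq_norm_mul_iff_real).mp h2
        -- ‖d‖ • (-p) = ‖-p‖ • d
        have hd1 : ‖d‖ = 1 := by
          by_contra hd1
          have : ‖d‖ < 1 := lt_of_le_of_ne hdnorm hd1
          rw [hnp] at h2
          nlinarith [real_inner_le_norm (-p) d]
        rw [hd1, one_smul] at this
        have hne0 : ‖-p‖ ≠ 0 := by rw [hnp]; exact ne_of_gt hpn
        rw [hdstar, this, smul_smul]
        rw [norm_smul, norm_norm, hd1, mul_one, inv_mul_cancel₀ hne0, one_smul]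
    calc Finset.univ.sup' _ (fun i => ⟪g i, dstar⟫)
        ≤ -‖p‖ := Finset.sup'_le _ _ (fun i _ => hds_val i)
      _ < ⟪p, d⟫ := hkey
      _ ≤ _ := hhull d
end

section
/- If all the gradients ∇f_i are Lipschitz continuous on bounded sets, then the steepest descent vector field s : H → H, s(u) = -co{∇f_i(u)}^0, is (1/2)-Hölder continuous on bounded sets: for every bounded set B there is C ≥ 0 such that ‖s(u) - s(v)‖ ≤ C‖u - v‖^{1/2} for all u, v ∈ B. -/
open scoped RealInnerProductSpace

/-- Variational inequality for the minimal norm element of a convex set. -/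
lemma min_norm_var_ineq {H : Type*} [NormedAddCommGroup H] [InnerProductSpace ℝ H]
    {K : Set H} (hK : Convex ℝ K) {b : H} (hb : b ∈ K)
    (hmin : ∀ y ∈ K, ‖b‖ ≤ ‖y‖) : ∀ y ∈ K, 0 ≤ ⟪b, y - b⟫ := by
  intro y hy
  by_contra h
  push_neg at h
  set c : ℝ := ⟪b, y - b⟫ with hc
  set n2 : ℝ := ‖y - b‖ ^ 2 with hn2
  have hn2nn : 0 ≤ n2 := by positivity
  have key : ∀ t : ℝ, 0 < t → t ≤ 1 → 0 ≤ 2 * c + t * n2 := by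
    intro t ht0 ht1
    have hmem : b + t • (y - b) ∈ K := by
      have := hK hb hy (by linarith : (0:ℝ) ≤ 1 - t) (le_of_lt ht0) (by ring)
      have heq : (1 - t) • b + t • y = b + t • (y - b) := by
        rw [smul_sub, sub_smul, one_smul]; abel
      rwa [heq] at this
    have hle : ‖b‖ ≤ ‖b + t • (y - b)‖ := hmin _ hmem
    have hsq : ‖b‖ ^ 2 ≤ ‖b + t • (y - b)‖ ^ 2 := by
      have := norm_nonneg b
      nlinarith [norm_nonneg (b + t • (y - b))]
    rw [norm_add_sq_real] at hsq
    have hinner : ⟪b, t • (y - b)⟫ = t * c := real_inner_smul_right b (y - b) t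
    have hnorm : ‖t • (y - b)‖ ^ 2 = t ^ 2 * n2 := by
      rw [norm_smul, mul_pow, hn2]
      simp [abs_of_pos ht0, Real.norm_eq_abs]
    rw [hinner, hnorm] at hsq
    nlinarith
  rcases eq_or_lt_of_le hn2nn with hz | hpos
  · have := key 1 one_pos le_rfl
    rw [← hz] at this; linarith
  · have ht0 : 0 < min 1 (-c / n2) := by
      apply lt_min one_pos
      apply div_pos (by linarith) hpos
    have := key _ ht0 (min_le_left _ _)
    have h2 : min 1 (-c / n2) * n2 ≤ (-c / n2) * n2 :=
      mul_le_mul_of_nonneg_right (min_le_right _ _) hn2nn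
    rw [div_mul_cancel₀ _ (ne_of_gt hpos)] at h2
    linarith

/-- If the gradients are Lipschitz continuous on bounded sets, the steepest descent
vector field `s` is `1/2`-Hölder continuous on bounded sets. -/
theorem steepest_descent_holder_on_bounded
    {H : Type*} [NormedAddCommGroup H] [InnerProductSpace ℝ H] [CompleteSpace H]
    {q : ℕ} (f : Fin q → H → ℝ) (hf : ∀ i, ContDiff ℝ 1 (f i))
    (hlip : ∀ i, ∀ B : Set H, Bornology.IsBounded B →
      ∃ L : NNReal, LipschitzOnWith L (gradient (f i)) B)
    (s : H → H)
    (hs : ∀ u : H, -s u ∈ convexHull ℝ (Set.range fun i => gradient (f i) u) ∧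
      ∀ y ∈ convexHull ℝ (Set.range fun i => gradient (f i) u), ‖s u‖ ≤ ‖y‖) :
    ∀ B : Set H, Bornology.IsBounded B →
      ∃ C : ℝ, 0 ≤ C ∧ ∀ u ∈ B, ∀ v ∈ B, ‖s u - s v‖ ≤ C * Real.sqrt ‖u - v‖ := by
  intro B hB
  set g : Fin q → H → H := fun i => gradient (f i) with hg
  -- Trivial case: B empty
  rcases Set.eq_empty_or_nonempty B with rfl | ⟨u0, hu0⟩
  · exact ⟨0, le_rfl, fun u hu => absurd hu (Set.notMem_empty u)⟩
  -- q must be positive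
  rcases Nat.eq_zero_or_pos q with rfl | hq
  · exfalso
    have h0 := (hs u0).1
    rw [Set.range_eq_empty, convexHull_empty] at h0
    exact h0
  set i0 : Fin q := ⟨0, hq⟩
  -- uniform Lipschitz constant
  set L : NNReal := Finset.univ.sup (fun i : Fin q => (hlip i B hB).choose) with hL
  have hLip : ∀ i : Fin q, ∀ x ∈ B, ∀ y ∈ B,
      dist (g i x) (g i y) ≤ (L : ℝ) * dist x y := by
    intro i x hx y hy
    calc dist (g i x) (g i y) ≤ ((hlip i B hB).choose : ℝ) * dist x y :=
          (hlip i B hB).choose_spec.dist_le_mul x hx y hy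
      _ ≤ (L : ℝ) * dist x y := by
          apply mul_le_mul_of_nonneg_right _ dist_nonneg
          exact_mod_cast Finset.le_sup (f := fun i : Fin q => (hlip i B hB).choose)
            (Finset.mem_univ i)
  -- diameter bound
  obtain ⟨D, hD⟩ := Metric.isBounded_iff.mp hB
  have hD0 : 0 ≤ D := le_trans dist_nonneg (hD hu0 hu0)
  -- bound on ‖s w‖ for w ∈ B
  set M : ℝ := ‖g i0 u0‖ + L * D with hM
  have hM0 : 0 ≤ M := by positivity
  have hsb : ∀ w ∈ B, ‖s w‖ ≤ M := by
    intro w hw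
    have h1 : ‖s w‖ ≤ ‖g i0 w‖ :=
      (hs w).2 _ (subset_convexHull ℝ _ ⟨i0, rfl⟩)
    have h2 : ‖g i0 w‖ ≤ ‖g i0 u0‖ + dist (g i0 w) (g i0 u0) := by
      rw [dist_eq_norm]
      have := norm_sub_norm_le (g i0 w) (g i0 u0)
      linarith [abs_le.mp (le_refl |‖g i0 w‖ - ‖g i0 u0‖|)]
    have h3 : dist (g i0 w) (g i0 u0) ≤ L * D := by
      calc dist (g i0 w) (g i0 u0) ≤ L * dist w u0 :=
            hLip i0 w hw u0 hu0
        _ ≤ L * D := by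
            exact mul_le_mul_of_nonneg_left (hD hw hu0) (by positivity)
    calc ‖s w‖ ≤ ‖g i0 w‖ := h1
      _ ≤ ‖g i0 u0‖ + dist (g i0 w) (g i0 u0) := h2
      _ ≤ M := by rw [hM]; linarith
  -- approximation lemma: points of K(u) are close to K(v)
  have happrox : ∀ u ∈ B, ∀ v ∈ B, ∀ a ∈ convexHull ℝ (Set.range fun i => g i u),
      ∃ y ∈ convexHull ℝ (Set.range fun i => g i v), ‖y - a‖ ≤ L * ‖u - v‖ := by
    intro u hu v hv a ha
    rw [convexHull_eq] at ha
    obtain ⟨ι, t, w, z, hw0, hw1, hz, hcm⟩ := ha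
    have hidx : ∀ i ∈ t, ∃ j : Fin q, g j u = z i := fun i hi => hz i hi
    classical
    set idx : ι → Fin q := fun i => if h : i ∈ t then (hidx i h).choose else i0 with hidx'
    have hzeq : ∀ i ∈ t, g (idx i) u = z i := by
      intro i hi
      simp only [hidx', dif_pos hi]
      exact (hidx i hi).choose_spec
    refine ⟨t.centerMass w (fun i => g (idx i) v), ?_, ?_⟩
    · exact t.centerMass_mem_convexHull hw0 (by rw [hw1]; exact one_pos)
        (fun i _ => ⟨idx i, rfl⟩)
    · have ha' : a = ∑ i ∈ t, w i • z i := by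
        rw [← hcm, Finset.centerMass_eq_of_sum_1 _ _ hw1]
      rw [Finset.centerMass_eq_of_sum_1 _ _ hw1, ha']
      have : ∑ i ∈ t, w i • g (idx i) v - ∑ i ∈ t, w i • z i
          = ∑ i ∈ t, w i • (g (idx i) v - g (idx i) u) := by
        rw [← Finset.sum_sub_distrib]
        apply Finset.sum_congr rfl
        intro i hi
        rw [← hzeq i hi, smul_sub]
      rw [this]
      calc ‖∑ i ∈ t, w i • (g (idx i) v - g (idx i) u)‖
          ≤ ∑ i ∈ t, ‖w i • (g (idx i) v - g (idx i) u)‖ := norm_sum_le _ _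
        _ ≤ ∑ i ∈ t, w i * (L * ‖u - v‖) := by
            apply Finset.sum_le_sum
            intro i hi
            rw [norm_smul, Real.norm_eq_abs, abs_of_nonneg (hw0 i hi)]
            apply mul_le_mul_of_nonneg_left _ (hw0 i hi)
            have := hLip (idx i) v hv u hu
            rw [dist_eq_norm, dist_eq_norm] at this
            calc ‖g (idx i) v - g (idx i) u‖ ≤ L * ‖v - u‖ := this
              _ = L * ‖u - v‖ := by rw [norm_sub_rev]
        _ = (L : ℝ) * ‖u - v‖ := by rw [← Finset.sum_mul, hw1, one_mul]
  -- main estimate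
  refine ⟨Real.sqrt (2 * M * L), Real.sqrt_nonneg _, fun u hu v hv => ?_⟩
  set a : H := -s u with hadef
  set b : H := -s v with hbdef
  have hKu : Convex ℝ (convexHull ℝ (Set.range fun i => g i u)) := convex_convexHull ℝ _
  have hKv : Convex ℝ (convexHull ℝ (Set.range fun i => g i v)) := convex_convexHull ℝ _
  have hminu : ∀ y ∈ convexHull ℝ (Set.range fun i => g i u), ‖a‖ ≤ ‖y‖ := by
    intro y hy; rw [hadef, norm_neg]; exact (hs u).2 y hy
  have hminv : ∀ y ∈ convexHull ℝ (Set.range fun i => g i v), ‖b‖ ≤ ‖y‖ := by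
    intro y hy; rw [hbdef, norm_neg]; exact (hs v).2 y hy
  obtain ⟨y, hy, hyclose⟩ := happrox u hu v hv a (hs u).1
  obtain ⟨y', hy', hy'close⟩ := happrox v hv u hu b (hs v).1
  have h1 : 0 ≤ ⟪b, y - b⟫ := min_norm_var_ineq hKv (hs v).1 hminv y hy
  have h2 : 0 ≤ ⟪a, y' - a⟫ := min_norm_var_ineq hKu (hs u).1 hminu y' hy'
  -- ⟪b, y - b⟫ = ⟪b, a - b⟫ + ⟪b, y - a⟫
  have e1 : ⟪b, y - b⟫ = ⟪b, a - b⟫ + ⟪b, y - a⟫ := by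
    rw [← inner_add_right]; congr 1; abel
  have e2 : ⟪a, y' - a⟫ = ⟪a, b - a⟫ + ⟪a, y' - b⟫ := by
    rw [← inner_add_right]; congr 1; abel
  have hba : ⟪b, y - a⟫ ≤ M * (L * ‖u - v‖) := by
    calc ⟪b, y - a⟫ ≤ ‖b‖ * ‖y - a‖ := real_inner_le_norm _ _
      _ ≤ M * (L * ‖u - v‖) := by
          apply mul_le_mul _ hyclose (norm_nonneg _) hM0
          rw [hbdef, norm_neg]; exact hsb v hv
  have hab : ⟪a, y' - b⟫ ≤ M * (L * ‖u - v‖) := by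
    calc ⟪a, y' - b⟫ ≤ ‖a‖ * ‖y' - b‖ := real_inner_le_norm _ _
      _ ≤ M * (L * ‖u - v‖) := by
          rw [show ‖u - v‖ = ‖v - u‖ from norm_sub_rev u v]
          apply mul_le_mul _ hy'close (norm_nonneg _) hM0
          rw [hadef, norm_neg]; exact hsb u hu
  have hsq : ‖a - b‖ ^ 2 ≤ 2 * M * L * ‖u - v‖ := by
    have hab2 : ⟪b, a - b⟫ + ⟪a, b - a⟫ = -(‖a - b‖ ^ 2) := by
      rw [norm_sub_sq_real]
      have q1 : ⟪b, a - b⟫ = ⟪b, a⟫ - ⟪b, b⟫ := inner_sub_right _ _ _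
      have q2 : ⟪a, b - a⟫ = ⟪a, b⟫ - ⟪a, a⟫ := inner_sub_right _ _ _
      rw [q1, q2, real_inner_comm b a, real_inner_self_eq_norm_sq,
        real_inner_self_eq_norm_sq]
      ring
    rw [e1] at h1; rw [e2] at h2
    nlinarith
  have heq : ‖s u - s v‖ = ‖a - b‖ := by
    rw [hadef, hbdef]
    rw [show -s u - -s v = -(s u - s v) by abel, norm_neg]
  rw [heq]
  have h5 : ‖a - b‖ = Real.sqrt (‖a - b‖ ^ 2) := by
    rw [Real.sqrt_sq (norm_nonneg _)]
  rw [h5]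
  calc Real.sqrt (‖a - b‖ ^ 2) ≤ Real.sqrt (2 * M * L * ‖u - v‖) :=
        Real.sqrt_le_sqrt hsq
    _ = Real.sqrt (2 * M * L) * Real.sqrt ‖u - v‖ :=
        Real.sqrt_mul (by positivity) _
end

section
/- Dissipative property: Let u : [t₀,T) → H be a C² solution of m·ü(t) + γ·u̇(t) - s(u(t)) = 0 with m, γ > 0, and fix i with L_i := Lip(∇f_i; u([t₀,T))) < +∞. Define E_i(t) = f_i(u(t)) + (m/γ)(d/dt)f_i(u(t)) + m‖u̇(t)‖². Then for almost every t, E_i'(t) ≤ -(m²/γ)‖ü(t)‖² - (1/γ)(γ² - m·L_i)‖u̇(t)‖². -/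
/-!
Write `g = ∇f_i(u)` and `w = m ü + γ u̇`. Since `-w` is the minimal-norm element of the convex
hull of the gradients, which contains `g`, the projection inequality gives
`⟪g, w⟫ ≤ -‖w‖²`. The only term of `E_i` that need not be differentiable is
`ψ = ⟪g, u̇⟫`: on compact subintervals `u` and `u̇` are Lipschitz (the equation bounds `ü` by
`‖g‖ + γ‖u̇‖`), hence so is `ψ`, and Rademacher's theorem makes it differentiable almost
everywhere. Wherever it is, the Lipschitz bound on `∇f_i` gives `ψ' ≤ ⟪g, ü⟫ + L_i ‖u̇‖²`, and
expanding `‖w‖²` in `⟪g, w⟫ ≤ -‖w‖²` yields the estimate.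
-/

open scoped RealInnerProductSpace NNReal Topology
open MeasureTheory Set Filter

section

variable {H : Type*} [NormedAddCommGroup H] [InnerProductSpace ℝ H]

theorem norm_sq_le_inner_of_forall_norm_le {K : Set H} (hK : Convex ℝ K) {p y : H}
    (hp : p ∈ K) (hmin : ∀ z ∈ K, ‖p‖ ≤ ‖z‖) (hy : y ∈ K) : ‖p‖ ^ 2 ≤ ⟪p, y⟫ := by
  have : Nonempty K := ⟨⟨p, hp⟩⟩
  have hinf : ‖0 - p‖ = ⨅ z : K, ‖0 - (z : H)‖ := by
    refine le_antisymm (le_ciInf fun z => by simpa using hmin z z.2) ?_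
    exact ciInf_le (f := fun z : K => ‖0 - (z : H)‖)
      ⟨0, by rintro _ ⟨z, rfl⟩; positivity⟩ ⟨p, hp⟩
  have := (norm_eq_iInf_iff_real_inner_le_zero hK hp).mp hinf y hy
  rw [zero_sub, inner_neg_left, inner_sub_right, real_inner_self_eq_norm_sq] at this
  linarith

theorem LipschitzOnWith.inner {α : Type*} [PseudoMetricSpace α] {f g : α → H} {s : Set α}
    {Kf Kg : ℝ≥0} {A B : ℝ} (hf : LipschitzOnWith Kf f s) (hg : LipschitzOnWith Kg g s)
    (hfA : ∀ x ∈ s, ‖f x‖ ≤ A) (hgB : ∀ x ∈ s, ‖g x‖ ≤ B) :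
    LipschitzOnWith (Kf * B + A * Kg).toNNReal (fun x => ⟪f x, g x⟫) s := by
  refine LipschitzOnWith.of_dist_le' fun x hx y hy => ?_
  have hA : 0 ≤ A := (norm_nonneg _).trans (hfA x hx)
  have hsplit : ⟪f x, g x⟫ - ⟪f y, g y⟫ = ⟪f x - f y, g x⟫ + ⟪f y, g x - g y⟫ := by
    simp only [inner_sub_left, inner_sub_right]; ring
  calc dist ⟪f x, g x⟫ ⟪f y, g y⟫
      ≤ ‖f x - f y‖ * ‖g x‖ + ‖f y‖ * ‖g x - g y‖ := by
        rw [Real.dist_eq, hsplit]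
        exact (abs_add_le _ _).trans
          (add_le_add (abs_real_inner_le_norm _ _) (abs_real_inner_le_norm _ _))
    _ ≤ (Kf * dist x y) * B + A * (Kg * dist x y) := by
        rw [← dist_eq_norm, ← dist_eq_norm]
        gcongr
        · exact hf.dist_le_mul x hx y hy
        · exact hgB x hx
        · exact hfA y hy
        · exact hg.dist_le_mul x hx y hy
    _ = (Kf * B + A * Kg) * dist x y := by ring

theorem Convex.lipschitzOnWith_of_norm_hasDerivAt_le {E : Type*} [NormedAddCommGroup E]
    [NormedSpace ℝ E] {f f' : ℝ → E} {s : Set ℝ} {M : ℝ} (hs : Convex ℝ s)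
    (hf : ∀ x ∈ s, HasDerivAt f (f' x) x) (hM : ∀ x ∈ s, ‖f' x‖ ≤ M) :
    LipschitzOnWith M.toNNReal f s :=
  LipschitzOnWith.of_dist_le' fun x hx y hy => by
    simpa only [dist_eq_norm] using
      hs.norm_image_sub_le_of_norm_hasDerivWithin_le
        (fun z hz => (hf z hz).hasDerivWithinAt) hM hy hx

theorem ae_differentiableAt_of_lipschitzOnWith_Icc {V : Type*} [NormedAddCommGroup V]
    [NormedSpace ℝ V] [FiniteDimensional ℝ V] {f : ℝ → V} {s : Set ℝ} (hs : IsOpen s)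
    (hf : ∀ a ∈ s, ∀ b ∈ s, ∃ C, LipschitzOnWith C f (Icc a b)) :
    ∀ᵐ x, x ∈ s → DifferentiableAt ℝ f x := by
  have hbv : LocallyBoundedVariationOn f s := fun a b ha hb => by
    obtain ⟨C, hC⟩ := hf a ha b hb
    rcases le_or_gt a b with hab | hba
    · exact (hC.locallyBoundedVariationOn a b ⟨le_rfl, hab⟩ ⟨hab, le_rfl⟩).mono
        fun x hx => ⟨hx.2, hx.2⟩
    · simp [Icc_eq_empty hba.not_ge, BoundedVariationOn]
  filter_upwards [hbv.ae_differentiableWithinAt_of_mem] with x hx hxs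
  exact (hx hxs).differentiableAt (hs.mem_nhds hxs)

theorem HasDerivAt.le_of_lipschitzOnWith_inner {G : H → H} {S : Set H} {L : ℝ≥0}
    (hG : LipschitzOnWith L G S) {u v : ℝ → H} {t d : ℝ} {u₁ v₁ : H}
    (hd : HasDerivAt (fun s => ⟪G (u s), v s⟫) d t) (hu : HasDerivAt u u₁ t)
    (hv : HasDerivAt v v₁ t) (hS : ∀ᶠ s in 𝓝 t, u s ∈ S) :
    d ≤ ⟪G (u t), v₁⟫ + L * ‖u₁‖ * ‖v t‖ := by
  -- Freezing the first factor at `t` isolates the part of the slope controlled by `L`.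
  set φ : ℝ → ℝ := fun s => ⟪G (u s), v s⟫ - ⟪G (u t), v s⟫
  have hφ : HasDerivAt φ (d - ⟪G (u t), v₁⟫) t :=
    hd.sub (((hasDerivAt_const t _).inner ℝ hv).congr_deriv (by simp))
  have hbound : Tendsto (fun s => L * ‖slope u t s‖ * ‖v s‖) (𝓝[≠] t)
      (𝓝 (L * ‖u₁‖ * ‖v t‖)) :=
    ((hasDerivAt_iff_tendsto_slope.mp hu).norm.const_mul _).mul
      (hv.continuousAt.norm.tendsto.mono_left nhdsWithin_le_nhds)
  have hslope : ∀ᶠ s in 𝓝[≠] t, slope φ t s ≤ L * ‖slope u t s‖ * ‖v s‖ := by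
    filter_upwards [nhdsWithin_le_nhds hS] with s hs
    have hst : slope φ t s = (s - t)⁻¹ * ⟪G (u s) - G (u t), v s⟫ := by
      simp [φ, slope_def_field, inner_sub_left, div_eq_inv_mul]
    calc slope φ t s
        ≤ |s - t|⁻¹ * (‖G (u s) - G (u t)‖ * ‖v s‖) := by
          rw [hst]
          refine (le_abs_self _).trans ?_
          rw [abs_mul, abs_inv]
          gcongr
          exact abs_real_inner_le_norm _ _
      _ ≤ |s - t|⁻¹ * ((L * ‖u s - u t‖) * ‖v s‖) := by
          gcongr
          simpa only [dist_eq_norm] using hG.dist_le_mul _ hs _ hS.self_of_nhds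
      _ = L * ‖slope u t s‖ * ‖v s‖ := by
          rw [slope_def_module, norm_smul, norm_inv, Real.norm_eq_abs]; ring
  have := le_of_tendsto_of_tendsto (hasDerivAt_iff_tendsto_slope.mp hφ) hbound hslope
  linarith

theorem exists_lipschitzOnWith_inner_comp_Icc {G : H → H} {L : ℝ≥0} {u u' u'' : ℝ → H}
    {m γ a b : ℝ} (hm : m ≠ 0) (hu : ∀ x ∈ Icc a b, HasDerivAt u (u' x) x)
    (hu' : ∀ x ∈ Icc a b, HasDerivAt u' (u'' x) x)
    (hacc : ∀ x ∈ Icc a b, ‖m • u'' x + γ • u' x‖ ≤ ‖G (u x)‖)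
    (hG : LipschitzOnWith L G (u '' Icc a b)) :
    ∃ C, LipschitzOnWith C (fun x => ⟪G (u x), u' x⟫) (Icc a b) := by
  have huc : ContinuousOn u (Icc a b) := fun x hx => (hu x hx).continuousAt.continuousWithinAt
  have hu'c : ContinuousOn u' (Icc a b) := fun x hx =>
    (hu' x hx).continuousAt.continuousWithinAt
  obtain ⟨A, hA⟩ := isCompact_Icc.exists_bound_of_continuousOn
    (hG.continuousOn.comp huc (mapsTo_image u _))
  obtain ⟨B, hB⟩ := isCompact_Icc.exists_bound_of_continuousOn hu'c
  have hu'' : ∀ x ∈ Icc a b, ‖u'' x‖ ≤ (A + |γ| * B) / |m| := fun x hx => by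
    rw [le_div_iff₀ (abs_pos.mpr hm), mul_comm, ← Real.norm_eq_abs, ← norm_smul]
    calc ‖m • u'' x‖ ≤ ‖m • u'' x + γ • u' x‖ + ‖γ • u' x‖ := norm_le_add_norm_add _ _
      _ ≤ A + |γ| * B := by
        rw [norm_smul, Real.norm_eq_abs]
        gcongr
        exacts [(hacc x hx).trans (hA x hx), hB x hx]
  exact ⟨_, (hG.comp ((convex_Icc a b).lipschitzOnWith_of_norm_hasDerivAt_le hu hB)
    (mapsTo_image u _)).inner ((convex_Icc a b).lipschitzOnWith_of_norm_hasDerivAt_le hu' hu'')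
    hA hB⟩

theorem energy_rate_le_of_inner_le_neg_norm_sq {m γ L dψ : ℝ} (hm : 0 ≤ m) (hγ : 0 < γ) {g v a : H}
    (hψ : dψ ≤ ⟪g, a⟫ + L * ‖v‖ ^ 2) (hg : ⟪g, m • a + γ • v⟫ ≤ -‖m • a + γ • v‖ ^ 2) :
    ⟪g, v⟫ + m / γ * dψ + m * (2 * ⟪v, a⟫)
      ≤ -(m ^ 2 / γ) * ‖a‖ ^ 2 - 1 / γ * (γ ^ 2 - m * L) * ‖v‖ ^ 2 := by
  have hexp : ‖m • a + γ • v‖ ^ 2 = m ^ 2 * ‖a‖ ^ 2 + 2 * m * γ * ⟪v, a⟫ + γ ^ 2 * ‖v‖ ^ 2 := by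
    rw [norm_add_sq_real, norm_smul, norm_smul, real_inner_smul_left, real_inner_smul_right,
      real_inner_comm, Real.norm_of_nonneg hm, Real.norm_of_nonneg hγ.le]
    ring
  rw [inner_add_right, real_inner_smul_right, real_inner_smul_right, hexp] at hg
  rw [← mul_le_mul_iff_of_pos_left hγ]
  field_simp
  nlinarith [mul_le_mul_of_nonneg_left hψ hm]

end

theorem imog_dissipative_general
    {H : Type*} [NormedAddCommGroup H] [InnerProductSpace ℝ H] [CompleteSpace H]
    {q : ℕ} (f : Fin q → H → ℝ) (hf : ∀ i, ContDiff ℝ 1 (f i))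
    (m γ : ℝ) (hm : 0 < m) (hγ : 0 < γ)
    (t₀ T : ℝ)
    (u u' u'' : ℝ → H)
    (hu : ∀ t ∈ Set.Ioo t₀ T, HasDerivAt u (u' t) t)
    (hu' : ∀ t ∈ Set.Ioo t₀ T, HasDerivAt u' (u'' t) t)
    (hode : ∀ t ∈ Set.Ioo t₀ T,
      -(m • u'' t + γ • u' t) ∈ convexHull ℝ (Set.range fun i => gradient (f i) (u t)) ∧
      ∀ y ∈ convexHull ℝ (Set.range fun i => gradient (f i) (u t)),
        ‖m • u'' t + γ • u' t‖ ≤ ‖y‖)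
    (i : Fin q) (Li : NNReal)
    (hLi : LipschitzOnWith Li (gradient (f i)) (u '' Set.Ico t₀ T))
    (E : ℝ → ℝ)
    (hE : ∀ t, E t = f i (u t) + (m / γ) * ⟪gradient (f i) (u t), u' t⟫ + m * ‖u' t‖ ^ 2) :
    ∀ᵐ t ∂(volume : Measure ℝ), t ∈ Set.Ioo t₀ T →
      DifferentiableAt ℝ E t ∧
      deriv E t ≤ -(m ^ 2 / γ) * ‖u'' t‖ ^ 2 - (1 / γ) * (γ ^ 2 - m * (Li : ℝ)) * ‖u' t‖ ^ 2 := by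
  set ψ : ℝ → ℝ := fun t => ⟪gradient (f i) (u t), u' t⟫
  have hgrad_mem : ∀ t, gradient (f i) (u t) ∈
      convexHull ℝ (Set.range fun j => gradient (f j) (u t)) := fun t =>
    subset_convexHull ℝ _ ⟨i, rfl⟩
  have hLi' : LipschitzOnWith Li (gradient (f i)) (u '' Ioo t₀ T) :=
    hLi.mono (image_mono Ioo_subset_Ico_self)
  have hψ : ∀ᵐ t, t ∈ Ioo t₀ T → DifferentiableAt ℝ ψ t :=
    ae_differentiableAt_of_lipschitzOnWith_Icc isOpen_Ioo fun a ha b hb =>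
      have hab : Icc a b ⊆ Ioo t₀ T := Icc_subset_Ioo ha.1 hb.2
      exists_lipschitzOnWith_inner_comp_Icc hm.ne' (fun x hx => hu x (hab hx))
        (fun x hx => hu' x (hab hx))
        (fun x hx => (hode x (hab hx)).2 _ (hgrad_mem x))
        (hLi'.mono (image_mono hab))
  filter_upwards [hψ] with t hψ' ht
  replace hψ' := (hψ' ht).hasDerivAt
  have hfu : HasDerivAt (fun s => f i (u s)) (ψ t) t :=
    ((hf i).differentiable one_ne_zero (u t)).hasGradientAt.hasFDerivAt.comp_hasDerivAt t (hu t ht)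
  have hEt : HasDerivAt E (ψ t + m / γ * deriv ψ t + m * (2 * ⟪u' t, u'' t⟫)) t := by
    rw [funext hE]
    exact (hfu.add (hψ'.const_mul _)).add ((hu' t ht).norm_sq.const_mul m)
  refine ⟨hEt.differentiableAt, hEt.deriv ▸ energy_rate_le_of_inner_le_neg_norm_sq hm.le hγ ?_ ?_⟩
  · exact hψ'.le_of_lipschitzOnWith_inner hLi' (hu t ht) (hu' t ht)
      (eventually_of_mem (Ioo_mem_nhds ht.1 ht.2) fun s hs => mem_image_of_mem u hs)
      |>.trans_eq (by ring)
  · have hproj := norm_sq_le_inner_of_forall_norm_le (convex_convexHull ℝ _) (hode t ht).1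
      (fun y hy => (norm_neg _).trans_le ((hode t ht).2 y hy)) (hgrad_mem t)
    rw [norm_neg, inner_neg_left, real_inner_comm] at hproj
    linarith

/-- Dissipative property of (IMOG): along a solution of
`m ü + γ u̇ - s(u) = 0`, the energy
`E_i(t) = f_i(u t) + (m/γ) (f_i∘u)'(t) + m ‖u̇(t)‖²` satisfies, for a.e. `t`,
`E_i'(t) ≤ -(m²/γ)‖ü(t)‖² - (1/γ)(γ² - m L_i)‖u̇(t)‖²`. -/
theorem imog_dissipative
    {H : Type*} [NormedAddCommGroup H] [InnerProductSpace ℝ H] [CompleteSpace H]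
    {q : ℕ} (f : Fin q → H → ℝ) (hf : ∀ i, ContDiff ℝ 1 (f i))
    (m γ : ℝ) (hm : 0 < m) (hγ : 0 < γ)
    (t₀ T : ℝ) (hT : t₀ < T)
    (u u' u'' : ℝ → H)
    (hucont : ContinuousOn u (Set.Ico t₀ T))
    (hu : ∀ t ∈ Set.Ioo t₀ T, HasDerivAt u (u' t) t)
    (hu' : ∀ t ∈ Set.Ioo t₀ T, HasDerivAt u' (u'' t) t)
    (hode : ∀ t ∈ Set.Ioo t₀ T,
      -(m • u'' t + γ • u' t) ∈ convexHull ℝ (Set.range fun i => gradient (f i) (u t)) ∧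
      ∀ y ∈ convexHull ℝ (Set.range fun i => gradient (f i) (u t)),
        ‖m • u'' t + γ • u' t‖ ≤ ‖y‖)
    (i : Fin q) (Li : NNReal)
    (hLi : LipschitzOnWith Li (gradient (f i)) (u '' Set.Ico t₀ T))
    (E : ℝ → ℝ)
    (hE : ∀ t, E t = f i (u t) + (m / γ) * ⟪gradient (f i) (u t), u' t⟫ + m * ‖u' t‖ ^ 2) :
    ∀ᵐ t ∂(volume : Measure ℝ), t ∈ Set.Ioo t₀ T →
      DifferentiableAt ℝ E t ∧
      deriv E t ≤ -(m ^ 2 / γ) * ‖u'' t‖ ^ 2 - (1 / γ) * (γ ^ 2 - m * (Li : ℝ)) * ‖u' t‖ ^ 2 :=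
  imog_dissipative_general f hf m γ hm hγ t₀ T u u' u'' hu hu' hode i Li hLi E hE
end

section
/- Upper bound for the values: Let u : [t₀,T) → H solve (IMOG) with E_i nonincreasing (guaranteed when γ² > m·L_i). Then f_i(u(t)) ≤ E_i(t₀) + (f_i(u(t₀)) - E_i(t₀))·exp(-(γ/m)(t - t₀)) for all t ∈ [t₀,T). -/
open scoped RealInnerProductSpace

/-!
Since `E` is nonincreasing and the kinetic term `m ‖u'‖²` is nonnegative,
`(m/γ) (f ∘ u)' ≤ E t₀ - f ∘ u` on `[t₀, T)`. Multiplying by the integrating factor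
`exp ((γ/m) (t - t₀))` makes `(f (u t) - E t₀) exp ((γ/m) (t - t₀))` nonincreasing.
-/

open Set Real

theorem HasGradientAt.comp_hasDerivAt {H : Type*} [NormedAddCommGroup H] [InnerProductSpace ℝ H]
    [CompleteSpace H] {f : H → ℝ} {g v : H} {u : ℝ → H} {t : ℝ} (hf : HasGradientAt f g (u t))
    (hu : HasDerivAt u v t) : HasDerivAt (f ∘ u) ⟪g, v⟫ t := by
  simpa using hf.hasFDerivAt.comp_hasDerivAt t hu

theorem le_add_mul_exp_of_hasDerivAt_le_mul_sub {g g' : ℝ → ℝ} {a b k C : ℝ}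
    (hg : ∀ s ∈ Ico a b, HasDerivAt g (g' s) s) (hbound : ∀ s ∈ Ico a b, g' s ≤ k * (C - g s)) :
    ∀ t ∈ Ico a b, g t ≤ C + (g a - C) * exp (-k * (t - a)) := by
  intro t ht
  set F : ℝ → ℝ := fun s => (g s - C) * exp (k * (s - a))
  have hF : ∀ s ∈ Ico a b, HasDerivAt F ((g' s + k * (g s - C)) * exp (k * (s - a))) s := by
    intro s hs
    have hexp : HasDerivAt (fun x => exp (k * (x - a))) (exp (k * (s - a)) * k) s := by
      simpa using (((hasDerivAt_id s).sub_const a).const_mul k).exp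
    exact (((hg s hs).sub_const C).mul hexp).congr_deriv (by ring)
  have hF_anti : AntitoneOn F (Ico a b) := by
    refine antitoneOn_of_hasDerivWithinAt_nonpos (convex_Ico a b)
      (f' := fun s => (g' s + k * (g s - C)) * exp (k * (s - a)))
      (fun s hs => (hF s hs).continuousAt.continuousWithinAt) (fun s hs => ?_) (fun s hs => ?_)
    all_goals rw [interior_Ico] at hs
    · exact (hF s (Ioo_subset_Ico_self hs)).hasDerivWithinAt
    · have hs' := hbound s (Ioo_subset_Ico_self hs)
      exact mul_nonpos_of_nonpos_of_nonneg (by linarith) (exp_pos _).le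
  have hFt : (g t - C) * exp (k * (t - a)) ≤ g a - C := by
    simpa [F] using hF_anti ⟨le_rfl, ht.1.trans_lt ht.2⟩ ht ht.1
  have hgt : g t - C ≤ (g a - C) * exp (-k * (t - a)) := by
    rw [neg_mul, exp_neg, ← div_eq_mul_inv]
    exact (le_div_iff₀ (exp_pos _)).mpr hFt
  linarith

theorem imog_upper_bound_values_general
    {H : Type*} [NormedAddCommGroup H] [InnerProductSpace ℝ H] [CompleteSpace H]
    {q : ℕ} (f : Fin q → H → ℝ) (hf : ∀ i, ContDiff ℝ 1 (f i))
    (m γ : ℝ) (hm : 0 < m) (hγ : 0 < γ)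
    (t₀ T : ℝ)
    (u u' : ℝ → H)
    (hu : ∀ t ∈ Set.Ico t₀ T, HasDerivAt u (u' t) t)
    (i : Fin q) (E : ℝ → ℝ)
    (hE : ∀ t, E t = f i (u t) + (m / γ) * ⟪gradient (f i) (u t), u' t⟫ + m * ‖u' t‖ ^ 2)
    (hmono : AntitoneOn E (Set.Ico t₀ T)) :
    ∀ t ∈ Set.Ico t₀ T,
      f i (u t) ≤ E t₀ + (f i (u t₀) - E t₀) * Real.exp (-(γ / m) * (t - t₀)) := by
  have hderiv : ∀ s ∈ Ico t₀ T, HasDerivAt (f i ∘ u) ⟪gradient (f i) (u s), u' s⟫ s :=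
    fun s hs => ((hf i).differentiable one_ne_zero (u s)).hasGradientAt.comp_hasDerivAt (hu s hs)
  have hbound : ∀ s ∈ Ico t₀ T,
      ⟪gradient (f i) (u s), u' s⟫ ≤ γ / m * (E t₀ - f i (u s)) := by
    intro s hs
    have hEs : E s ≤ E t₀ := hmono ⟨le_rfl, hs.1.trans_lt hs.2⟩ hs hs.1
    have hkinetic : 0 ≤ m * ‖u' s‖ ^ 2 := by positivity
    have h : m / γ * ⟪gradient (f i) (u s), u' s⟫ ≤ E t₀ - f i (u s) := by
      rw [hE s] at hEs; linarith
    calc ⟪gradient (f i) (u s), u' s⟫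
        = γ / m * (m / γ * ⟪gradient (f i) (u s), u' s⟫) := by field_simp
      _ ≤ γ / m * (E t₀ - f i (u s)) := by gcongr
  exact le_add_mul_exp_of_hasDerivAt_le_mul_sub hderiv hbound

/-- Upper bound for the values along an (IMOG) trajectory with nonincreasing energy:
`f_i(u(t)) ≤ E_i(t₀) + (f_i(u(t₀)) - E_i(t₀)) exp(-(γ/m)(t - t₀))`. -/
theorem imog_upper_bound_values
    {H : Type*} [NormedAddCommGroup H] [InnerProductSpace ℝ H] [CompleteSpace H]
    {q : ℕ} (f : Fin q → H → ℝ) (hf : ∀ i, ContDiff ℝ 1 (f i))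
    (m γ : ℝ) (hm : 0 < m) (hγ : 0 < γ)
    (t₀ T : ℝ) (hT : t₀ < T)
    (u u' u'' : ℝ → H)
    (hu : ∀ t ∈ Set.Ico t₀ T, HasDerivAt u (u' t) t)
    (hu' : ∀ t ∈ Set.Ico t₀ T, HasDerivAt u' (u'' t) t)
    (hode : ∀ t ∈ Set.Ico t₀ T,
      -(m • u'' t + γ • u' t) ∈ convexHull ℝ (Set.range fun i => gradient (f i) (u t)) ∧
      ∀ y ∈ convexHull ℝ (Set.range fun i => gradient (f i) (u t)),
        ‖m • u'' t + γ • u' t‖ ≤ ‖y‖)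
    (i : Fin q) (E : ℝ → ℝ)
    (hE : ∀ t, E t = f i (u t) + (m / γ) * ⟪gradient (f i) (u t), u' t⟫ + m * ‖u' t‖ ^ 2)
    (hmono : AntitoneOn E (Set.Ico t₀ T)) :
    ∀ t ∈ Set.Ico t₀ T,
      f i (u t) ≤ E t₀ + (f i (u t₀) - E t₀) * Real.exp (-(γ / m) * (t - t₀)) :=
  imog_upper_bound_values_general f hf m γ hm hγ t₀ T u u' hu i E hE hmono
end

section
/- Let h ∈ C¹([t₀,∞); ℝ) be nonnegative with locally absolutely continuous derivative, satisfying m·ḧ(t) + γ·ḣ(t) ≤ g(t) for a.e. t, where m, γ > 0 and g ∈ L¹([t₀,∞); ℝ). Then lim_{t→∞} h(t) exists. -/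
/-!
Integrating `m ḧ + γ ḣ ≤ g` shows that `u = m ḣ + γ h` satisfies `u b - u a ≤ ∫ a..b, g`, so
`u - ∫ g` is nonincreasing and `u` has a limit in `[-∞, ∞)`. The limit `-∞` would force `ḣ → -∞`,
impossible for `h ≥ 0`. If `u → L`, then `h` solves `m ḣ + γ h = u` with convergent forcing, and
the integrating factor `e^{γt/m}` shows `h → L / γ`.
-/

open MeasureTheory Filter Set Real Topology

theorem exists_forall_intervalIntegrable_of_sub_eq_integral {f f' : ℝ → ℝ} {t₀ : ℝ}
    (hd : ∀ᵐ t ∂volume, t₀ ≤ t → HasDerivAt f (f' t) t)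
    (hac : ∀ a b : ℝ, t₀ ≤ a → a ≤ b → f b - f a = ∫ s in a..b, f' s) :
    ∃ T, t₀ ≤ T ∧ ∀ a b : ℝ, T ≤ a → a ≤ b → IntervalIntegrable f' volume a b := by
  by_contra! hbad
  obtain ⟨a, b, ha, hab, hni⟩ := hbad t₀ le_rfl
  -- The junk value `∫ = 0` makes `f` constant on `[b, ∞)`, so `f'` vanishes a.e. there.
  have hconst : ∀ y, b ≤ y → f y = f a := fun y hy => by
    have hni' : ¬ IntervalIntegrable f' volume a y := fun hI =>
      hni (hI.mono_set (by rw [uIcc_of_le hab, uIcc_of_le (hab.trans hy)]; gcongr))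
    linarith [hac a y ha (hab.trans hy), intervalIntegral.integral_undef hni']
  have hzero : ∀ᵐ t ∂volume, t ∈ Ioi b → f' t = 0 := by
    filter_upwards [hd] with t ht htb
    have hloc : f =ᶠ[𝓝 t] fun _ => f a :=
      eventually_of_mem (Ioi_mem_nhds htb) fun s hs => hconst s (le_of_lt hs)
    exact (ht (ha.trans (hab.trans (le_of_lt htb)))).unique
      ((hasDerivAt_const t (f a)).congr_of_eventuallyEq hloc)
  obtain ⟨x, y, hx, hxy, hni⟩ := hbad b (ha.trans hab)
  refine hni ((intervalIntegrable_iff_integrableOn_Ioc_of_le hxy).2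
    (integrableOn_zero.congr_fun_ae ?_))
  rw [EventuallyEq, ae_restrict_iff' measurableSet_Ioc]
  filter_upwards [hzero] with t ht htxy using (ht (hx.trans_lt htxy.1)).symm

theorem mul_deriv_add_mul_sub_le_integral {h h' h'' g : ℝ → ℝ} {m γ a b : ℝ} (hab : a ≤ b)
    (hd : ∀ t ∈ Icc a b, HasDerivAt h (h' t) t)
    (hac : ∀ t ∈ Icc a b, h' t - h' a = ∫ s in a..t, h'' s)
    (hi : IntervalIntegrable h'' volume a b) (hg : IntervalIntegrable g volume a b)
    (hineq : ∀ᵐ t ∂volume, t ∈ Icc a b → m * h'' t + γ * h' t ≤ g t) :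
    (m * h' b + γ * h b) - (m * h' a + γ * h a) ≤ ∫ s in a..b, g s := by
  have hcont : ContinuousOn h' (Icc a b) := by
    have hprim := intervalIntegral.continuousOn_primitive_interval' hi left_mem_uIcc
    rw [uIcc_of_le hab] at hprim
    exact (continuousOn_const.add hprim).congr fun t ht => eq_add_of_sub_eq' (hac t ht)
  have hi' : IntervalIntegrable h' volume a b :=
    (hcont.mono (uIcc_of_le hab).subset).intervalIntegrable
  have hftc : ∫ s in a..b, h' s = h b - h a :=
    intervalIntegral.integral_eq_sub_of_hasDerivAt
      (fun t ht => hd t (by rwa [uIcc_of_le hab] at ht)) hi'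
  have hmono : ∫ s in a..b, (m * h'' s + γ * h' s) ≤ ∫ s in a..b, g s := by
    refine intervalIntegral.integral_mono_ae_restrict hab
      ((hi.const_mul m).add (hi'.const_mul γ)) hg ?_
    rw [EventuallyLE, ae_restrict_iff' measurableSet_Icc]
    exact hineq
  rw [intervalIntegral.integral_add (hi.const_mul m) (hi'.const_mul γ),
    intervalIntegral.integral_const_mul, intervalIntegral.integral_const_mul,
    ← hac b (right_mem_Icc.2 hab), hftc] at hmono
  linarith

theorem tendsto_atBot_or_tendsto_of_sub_le_integral {u g : ℝ → ℝ} {T : ℝ}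
    (hg : IntegrableOn g (Ici T))
    (hu : ∀ a b : ℝ, T ≤ a → a ≤ b → u b - u a ≤ ∫ s in a..b, g s) :
    Tendsto u atTop atBot ∨ ∃ L, Tendsto u atTop (𝓝 L) := by
  set G : ℝ → ℝ := fun t => ∫ s in T..t, g s
  have hG : Tendsto G atTop (𝓝 (∫ s in Ioi T, g s)) :=
    intervalIntegral_tendsto_integral_Ioi T (hg.mono_set Ioi_subset_Ici_self) tendsto_id
  have hgi : ∀ x y, T ≤ x → T ≤ y → IntervalIntegrable g volume x y := fun x y hx hy =>
    (hg.mono_set fun s hs => (le_min hx hy).trans hs.1).intervalIntegrable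
  have hanti : Antitone fun t => u (max t T) - G (max t T) := by
    intro s t hst
    have hsum := intervalIntegral.integral_add_adjacent_intervals
      (hgi T (max s T) le_rfl (le_max_right s T))
      (hgi (max s T) (max t T) (le_max_right s T) (le_max_right t T))
    linarith [hu _ _ (le_max_right s T) (max_le_max_right T hst)]
  have heq : (fun t => u (max t T) - G (max t T) + G t) =ᶠ[atTop] u := by
    filter_upwards [eventually_ge_atTop T] with t ht
    simp only [max_eq_left ht, sub_add_cancel]
  rcases tendsto_atTop_of_antitone hanti with hbot | ⟨l, hl⟩
  · exact Or.inl ((hbot.atBot_add hG).congr' heq)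
  · exact Or.inr ⟨_, (hl.add hG).congr' heq⟩

theorem tendsto_atBot_of_tendsto_deriv_atBot {f f' : ℝ → ℝ}
    (hd : ∀ᶠ t in atTop, HasDerivAt f (f' t) t) (hf' : Tendsto f' atTop atBot) :
    Tendsto f atTop atBot := by
  obtain ⟨S, hS⟩ := (hd.and (hf'.eventually_le_atBot (-1))).exists_forall_of_atTop
  have hanti : AntitoneOn (fun t => f t + t) (Ici S) := by
    refine antitoneOn_of_hasDerivWithinAt_nonpos (convex_Ici S) (f' := fun t => f' t + 1)
      (fun t ht => ((hS t ht).1.continuousAt.add continuousAt_id).continuousWithinAt)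
      (fun t ht => ((hS t (interior_subset ht)).1.add (hasDerivAt_id t)).hasDerivWithinAt)
      fun t ht => by linarith [(hS t (interior_subset ht)).2]
  refine tendsto_atBot_mono' atTop ?_
    (tendsto_atBot_add_const_left atTop (f S + S) tendsto_neg_atTop_atBot)
  filter_upwards [eventually_ge_atTop S] with t ht
  linarith [hanti self_mem_Ici ht ht]

theorem abs_sub_div_le_of_abs_deriv_add_mul_sub_le {h h' : ℝ → ℝ} {c L ε S : ℝ} (hc : 0 < c)
    (hd : ∀ t ≥ S, HasDerivAt h (h' t) t) (hε : ∀ t ≥ S, |h' t + c * h t - L| ≤ ε) :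
    ∀ t ≥ S, |h t - L / c| ≤ exp (c * (S - t)) * |h S - L / c| + ε / c := by
  intro t ht
  set φ : ℝ → ℝ := fun s => exp (c * s) * (h s - L / c)
  have hφ : ∀ s ≥ S, HasDerivAt φ (exp (c * s) * (h' s + c * h s - L)) s := fun s hs => by
    refine (((hasDerivAt_id s).const_mul c).exp.mul ((hd s hs).sub_const (L / c))).congr_deriv ?_
    simp only [id]
    field_simp
    ring
  have hfence := image_norm_le_of_norm_deriv_right_le_deriv_boundary (a := S) (b := t)
    (f := fun s => φ s - φ S) (B := fun s => ε / c * (exp (c * s) - exp (c * S)))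
    (B' := fun s => ε * exp (c * s))
    (fun s hs => ((hφ s hs.1).sub_const (φ S)).continuousAt.continuousWithinAt)
    (fun s hs => ((hφ s hs.1).sub_const (φ S)).hasDerivWithinAt)
    (by simp)
    (fun s => ((((hasDerivAt_id s).const_mul c).exp.sub_const (exp (c * S))).const_mul
      (ε / c)).congr_deriv (by simp only [id]; field_simp))
    (fun s hs => by
      rw [Real.norm_eq_abs, abs_mul, abs_of_pos (exp_pos _), mul_comm]
      exact mul_le_mul_of_nonneg_right (hε s hs.1) (exp_pos _).le)
    ⟨ht, le_rfl⟩
  have hε0 : 0 ≤ ε := (abs_nonneg _).trans (hε S le_rfl)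
  have hexp : exp (c * t) * exp (c * (S - t)) = exp (c * S) := by rw [← exp_add]; ring_nf
  simp only [Real.norm_eq_abs, φ] at hfence
  have hscaled : exp (c * t) * |h t - L / c|
      ≤ exp (c * t) * (exp (c * (S - t)) * |h S - L / c| + ε / c) := by
    have hrev := abs_sub_abs_le_abs_sub (exp (c * t) * (h t - L / c)) (exp (c * S) * (h S - L / c))
    rw [abs_mul, abs_mul, abs_of_pos (exp_pos _), abs_of_pos (exp_pos _)] at hrev
    have hεS : 0 ≤ ε / c * exp (c * S) := by positivity
    rw [mul_add, ← mul_assoc, hexp]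
    linarith
  exact le_of_mul_le_mul_left hscaled (exp_pos _)

theorem tendsto_div_of_tendsto_deriv_add_mul {h h' : ℝ → ℝ} {c L : ℝ} (hc : 0 < c)
    (hd : ∀ᶠ t in atTop, HasDerivAt h (h' t) t)
    (hlim : Tendsto (fun t => h' t + c * h t) atTop (𝓝 L)) :
    Tendsto h atTop (𝓝 (L / c)) := by
  rw [Metric.tendsto_nhds]
  intro ε hε
  have hclose : ∀ᶠ t in atTop, |h' t + c * h t - L| ≤ c * ε / 2 :=
    (Metric.tendsto_nhds.1 hlim _ (by positivity)).mono fun t ht => ht.le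
  obtain ⟨S, hS⟩ := (hd.and hclose).exists_forall_of_atTop
  have hbound := abs_sub_div_le_of_abs_deriv_add_mul_sub_le hc (fun t ht => (hS t ht).1)
    fun t ht => (hS t ht).2
  have hdecay : Tendsto (fun t => exp (c * (S - t)) * |h S - L / c|) atTop (𝓝 0) := by
    have : Tendsto (fun t => c * (S - t)) atTop atBot :=
      (tendsto_atBot_add_const_left atTop S tendsto_neg_atTop_atBot).const_mul_atBot hc
    simpa using (tendsto_exp_atBot.comp this).mul_const |h S - L / c|
  filter_upwards [eventually_ge_atTop S, hdecay.eventually (gt_mem_nhds (half_pos hε))]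
    with t ht hsmall
  rw [Real.dist_eq]
  calc |h t - L / c| ≤ exp (c * (S - t)) * |h S - L / c| + c * ε / 2 / c := hbound t ht
    _ < ε / 2 + ε / 2 := by rw [mul_div_assoc, mul_div_cancel_left₀ _ hc.ne']; linarith
    _ = ε := add_halves ε

/-- Alvarez-type lemma: a nonnegative `C¹` function `h` with locally absolutely
continuous derivative satisfying `m ḧ + γ ḣ ≤ g` a.e. with `g ∈ L¹` has a limit at
infinity. -/
theorem alvarez_lemma
    (m γ : ℝ) (hm : 0 < m) (hγ : 0 < γ) (t₀ : ℝ)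
    (h h' h'' g : ℝ → ℝ)
    (hpos : ∀ t, t₀ ≤ t → 0 ≤ h t)
    (hd : ∀ t, t₀ ≤ t → HasDerivAt h (h' t) t)
    (hd2 : ∀ᵐ t ∂(volume : Measure ℝ), t₀ ≤ t → HasDerivAt h' (h'' t) t)
    (hac : ∀ a b : ℝ, t₀ ≤ a → a ≤ b → h' b - h' a = ∫ s in a..b, h'' s)
    (hg : IntegrableOn g (Set.Ici t₀) volume)
    (hineq : ∀ᵐ t ∂(volume : Measure ℝ), t₀ ≤ t → m * h'' t + γ * h' t ≤ g t) :
    ∃ l : ℝ, Tendsto h atTop (nhds l) := by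
  obtain ⟨T, hT, hint⟩ := exists_forall_intervalIntegrable_of_sub_eq_integral hd2 hac
  have hu : ∀ a b, T ≤ a → a ≤ b →
      (m * h' b + γ * h b) - (m * h' a + γ * h a) ≤ ∫ s in a..b, g s := fun a b ha hab =>
    mul_deriv_add_mul_sub_le_integral hab (fun t ht => hd t (hT.trans (ha.trans ht.1)))
      (fun t ht => hac a t (hT.trans ha) ht.1) (hint a b ha hab)
      (hg.mono_set fun s hs => hT.trans (ha.trans (uIcc_of_le hab ▸ hs).1)).intervalIntegrable
      (by filter_upwards [hineq] with t ht htab using ht (hT.trans (ha.trans htab.1)))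
  have hdT : ∀ᶠ t in atTop, HasDerivAt h (h' t) t := eventually_atTop.2 ⟨t₀, hd⟩
  rcases tendsto_atBot_or_tendsto_of_sub_le_integral (hg.mono_set (Ici_subset_Ici.2 hT)) hu
    with hbot | ⟨L, hL⟩
  · have hh' : Tendsto h' atTop atBot := by
      refine tendsto_atBot_mono' atTop ?_ (hbot.atBot_div_const hm)
      filter_upwards [eventually_ge_atTop t₀] with t ht
      rw [le_div_iff₀' hm]
      linarith [mul_nonneg hγ.le (hpos t ht)]
    have hh := tendsto_atBot_of_tendsto_deriv_atBot hdT hh'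
    obtain ⟨t, hneg, ht⟩ := ((hh.eventually_lt_atBot 0).and (eventually_ge_atTop t₀)).exists
    exact absurd (hpos t ht) hneg.not_ge
  · refine ⟨L / m / (γ / m), tendsto_div_of_tendsto_deriv_add_mul (div_pos hγ hm) hdT ?_⟩
    convert hL.div_const m using 2
    field_simp
end

section
/- Demiclosedness of the convexified gradient map: Let f_i : H → ℝ, i = 1,...,q, be C¹ with gradients that are weak-to-strong continuous along bounded sequences (e.g. H finite dimensional, or ∇f_i compact). If u_n* ∈ co{∇f_i(u_n)}, u_n* → 0 strongly and u_n ⇀ u_∞ weakly, then 0 ∈ co{∇f_i(u_∞)}. -/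
open scoped RealInnerProductSpace
open Filter Set Topology

/-!
By uniform boundedness the weakly convergent sequence `u_n` is bounded, so every `∇f_i(u_n)`
converges strongly to `∇f_i(u_∞)`. Writing `u_n* = ∑ θⁿ_i ∇f_i(u_n)` with `θⁿ` in the standard
simplex, a subsequence `θⁿ → θ` exists by compactness, and passing to the limit gives
`0 = ∑ θ_i ∇f_i(u_∞)`.
-/

theorem mem_convexHull_range_iff_exists_stdSimplex {R E ι : Type*} [Field R] [LinearOrder R]
    [IsStrictOrderedRing R] [AddCommGroup E] [Module R E] [Fintype ι] {z : ι → E} {x : E} :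
    x ∈ convexHull R (range z) ↔ ∃ w ∈ stdSimplex R ι, ∑ i, w i • z i = x := by
  classical
  let L : (ι → R) →ₗ[R] E := ∑ i, (LinearMap.proj i).smulRight (z i)
  have hL : ∀ w, L w = ∑ i, w i • z i := fun w => by simp [L, LinearMap.sum_apply]
  have hhull : convexHull R (range z) = L '' stdSimplex R ι := by
    rw [← convexHull_basis_eq_stdSimplex, LinearMap.image_convexHull, ← range_comp]
    congr 1
    ext j
    simp [Function.comp, hL, ite_smul, Finset.sum_ite_eq]
  simp only [hhull, mem_image, hL]

theorem mem_convexHull_range_of_tendsto {E ι : Type*} [AddCommGroup E] [Module ℝ E]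
    [TopologicalSpace E] [ContinuousAdd E] [ContinuousSMul ℝ E] [T2Space E] [Fintype ι]
    {z : ℕ → ι → E} {zlim : ι → E} {x : ℕ → E} {xlim : E}
    (hz : ∀ i, Tendsto (fun n => z n i) atTop (𝓝 (zlim i)))
    (hx : Tendsto x atTop (𝓝 xlim)) (hmem : ∀ n, x n ∈ convexHull ℝ (range (z n))) :
    xlim ∈ convexHull ℝ (range zlim) := by
  simp only [mem_convexHull_range_iff_exists_stdSimplex] at hmem ⊢
  choose w hw hwx using hmem
  obtain ⟨wlim, hwlim, φ, hφ, hwφ⟩ := (isCompact_stdSimplex ℝ ι).tendsto_subseq hw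
  refine ⟨wlim, hwlim, tendsto_nhds_unique ?_ (hx.comp hφ.tendsto_atTop)⟩
  have hcomb : Tendsto (fun n => ∑ i, w (φ n) i • z (φ n) i) atTop
      (𝓝 (∑ i, wlim i • zlim i)) :=
    tendsto_finsetSum _ fun i _ =>
      ((continuous_apply i).tendsto _ |>.comp hwφ).smul ((hz i).comp hφ.tendsto_atTop)
  simpa only [hwx, Function.comp_def] using hcomb

theorem isBounded_range_of_tendsto_inner {H : Type*} [NormedAddCommGroup H]
    [InnerProductSpace ℝ H] [CompleteSpace H] {u : ℕ → H} {ulim : H}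
    (hweak : ∀ y : H, Tendsto (fun n => ⟪u n, y⟫) atTop (𝓝 ⟪ulim, y⟫)) :
    Bornology.IsBounded (range u) := by
  have hpointwise : ∀ y : H, ∃ C, ∀ n, ‖innerSL ℝ (u n) y‖ ≤ C := fun y => by
    obtain ⟨C, hC⟩ := ((continuous_norm.tendsto _).comp (hweak y)).bddAbove_range
    exact ⟨C, fun n => hC (mem_range_self n)⟩
  obtain ⟨C, hC⟩ := banach_steinhaus hpointwise
  refine isBounded_iff_forall_norm_le.2 ⟨C, ?_⟩
  rintro _ ⟨n, rfl⟩
  simpa only [innerSL_apply_norm] using hC n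

theorem demiclosed_convexified_gradient_general
    {H : Type*} [NormedAddCommGroup H] [InnerProductSpace ℝ H] [CompleteSpace H]
    {q : ℕ} (f : Fin q → H → ℝ)
    (hws : ∀ (i : Fin q) (x : ℕ → H) (xlim : H),
      Bornology.IsBounded (Set.range x) →
      (∀ y : H, Tendsto (fun n => ⟪x n, y⟫) atTop (nhds ⟪xlim, y⟫)) →
      Tendsto (fun n => gradient (f i) (x n)) atTop (nhds (gradient (f i) xlim)))
    (u ustar : ℕ → H) (ulim : H)
    (hmem : ∀ n, ustar n ∈ convexHull ℝ (Set.range fun i => gradient (f i) (u n)))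
    (hstar : Tendsto ustar atTop (nhds (0 : H)))
    (hweak : ∀ y : H, Tendsto (fun n => ⟪u n, y⟫) atTop (nhds ⟪ulim, y⟫)) :
    (0 : H) ∈ convexHull ℝ (Set.range fun i => gradient (f i) ulim) :=
  mem_convexHull_range_of_tendsto
    (fun i => hws i u ulim (isBounded_range_of_tendsto_inner hweak) hweak) hstar hmem

/-- Demiclosedness of the convexified gradient map: if the gradients are
weak-to-strong continuous along bounded sequences, `u_n* ∈ co{∇f_i(u_n)}`,
`u_n* → 0` strongly and `u_n ⇀ u_∞` weakly, then `0 ∈ co{∇f_i(u_∞)}`. -/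
theorem demiclosed_convexified_gradient
    {H : Type*} [NormedAddCommGroup H] [InnerProductSpace ℝ H] [CompleteSpace H]
    {q : ℕ} (f : Fin q → H → ℝ) (hf : ∀ i, ContDiff ℝ 1 (f i))
    (hws : ∀ (i : Fin q) (x : ℕ → H) (xlim : H),
      Bornology.IsBounded (Set.range x) →
      (∀ y : H, Tendsto (fun n => ⟪x n, y⟫) atTop (nhds ⟪xlim, y⟫)) →
      Tendsto (fun n => gradient (f i) (x n)) atTop (nhds (gradient (f i) xlim)))
    (u ustar : ℕ → H) (ulim : H)
    (hmem : ∀ n, ustar n ∈ convexHull ℝ (Set.range fun i => gradient (f i) (u n)))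
    (hstar : Tendsto ustar atTop (nhds (0 : H)))
    (hweak : ∀ y : H, Tendsto (fun n => ⟪u n, y⟫) atTop (nhds ⟪ulim, y⟫)) :
    (0 : H) ∈ convexHull ℝ (Set.range fun i => gradient (f i) ulim) :=
  demiclosed_convexified_gradient_general f hws u ustar ulim hmem hstar hweak
end
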